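/- Let w ∈ ℝ³ and let U be a symmetric traceless 3×3 real matrix. Then (1/2)|w|² = (3/2) λ_max(w ⊗ w − U) if and only if U = w ⊗ w − (1/3)|w|² I. -/

import Mathlib

/-- The maximal eigenvalue of a (Hermitian, i.e. real symmetric) matrix. -/
noncomputable def lamMax (A : Matrix (Fin 3) (Fin 3) ℝ) : ℝ :=
  if h : A.IsHermitian then ⨆ i, h.eigenvalues i else 0

lemma trace_eq_sum_eigs {A : Matrix (Fin 3) (Fin 3) ℝ} (hA : A.IsHermitian) :
    A.trace = ∑ i, hA.eigenvalues i := by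
  have h := hA.spectral_theorem
  have : A.trace = (Matrix.diagonal (RCLike.ofReal ∘ hA.eigenvalues) : Matrix (Fin 3) (Fin 3) ℝ).trace := by
    conv_lhs => rw [h]
    rw [Unitary.conjStarAlgAut_apply, Matrix.trace_mul_cycle, Matrix.UnitaryGroup.star_mul_self, Matrix.one_mul]
  rw [this, Matrix.trace_diagonal]
  simp

lemma diag_eq {A : Matrix (Fin 3) (Fin 3) ℝ} (hA : A.IsHermitian) (c : ℝ)
    (h : A = c • (1 : Matrix (Fin 3) (Fin 3) ℝ)) (i : Fin 3) : hA.eigenvalues i = c := by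
  have h2 : star (hA.eigenvectorUnitary : Matrix (Fin 3) (Fin 3) ℝ) * A *
      (hA.eigenvectorUnitary : Matrix (Fin 3) (Fin 3) ℝ) =
      Matrix.diagonal (RCLike.ofReal ∘ hA.eigenvalues) := by
    rw [← Unitary.conjStarAlgAut_star_apply (S := ℝ)]
    exact hA.conjStarAlgAut_star_eigenvectorUnitary
  have h3 : Matrix.diagonal (RCLike.ofReal ∘ hA.eigenvalues) =
      c • (1 : Matrix (Fin 3) (Fin 3) ℝ) := by
    rw [← h2]
    conv_lhs => enter [1, 2]; rw [h]
    rw [Matrix.mul_smul, Matrix.mul_one, Matrix.smul_mul,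
      Matrix.UnitaryGroup.star_mul_self]
  have := congrFun (congrFun h3 i) i
  simpa using this

theorem kinetic_energy_eq_lamMax_iff (w : Fin 3 → ℝ) (U : Matrix (Fin 3) (Fin 3) ℝ)
    (hU : U.IsHermitian) (hTr : U.trace = 0) :
    (1 / 2) * (∑ i, w i ^ 2) = (3 / 2) * lamMax (Matrix.vecMulVec w w - U) ↔
      U = Matrix.vecMulVec w w -
        ((1 / 3) * ∑ i, w i ^ 2) • (1 : Matrix (Fin 3) (Fin 3) ℝ) := by
  set S := ∑ i, w i ^ 2 with hS
  set A := Matrix.vecMulVec w w - U with hAdef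
  have hA : A.IsHermitian := by
    have h1 : (Matrix.vecMulVec w w).IsHermitian := by
      ext i j
      simp [Matrix.vecMulVec_apply, Matrix.conjTranspose_apply, mul_comm]
    exact h1.sub hU
  have hlam : lamMax A = ⨆ i, hA.eigenvalues i := by
    rw [lamMax, dif_pos hA]
  have htr : A.trace = S := by
    rw [hAdef, Matrix.trace_sub, hTr, sub_zero, Matrix.trace]
    simp [Matrix.diag, Matrix.vecMulVec_apply, sq, hS]
  have hsum : ∑ i, hA.eigenvalues i = S := by rw [← trace_eq_sum_eigs hA, htr]
  have hbdd : BddAbove (Set.range hA.eigenvalues) := Set.Finite.bddAbove (Set.finite_range _)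
  constructor
  · intro h
    rw [hlam] at h
    set c := ⨆ i, hA.eigenvalues i with hc
    have hle : ∀ i : Fin 3, hA.eigenvalues i ≤ c := fun i => le_ciSup hbdd i
    have hS3 : S = 3 * c := by linarith
    have hall : ∀ i ∈ (Finset.univ : Finset (Fin 3)), hA.eigenvalues i = c := by
      rw [← Finset.sum_eq_sum_iff_of_le (fun i _ => hle i)]
      rw [hsum, hS3]
      simp
    have hev : hA.eigenvalues = fun _ => c := funext fun i => hall i (Finset.mem_univ i)
    have hAc : A = c • (1 : Matrix (Fin 3) (Fin 3) ℝ) := by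
      have hst := hA.spectral_theorem
      rw [hev] at hst
      have hdiag : Matrix.diagonal (RCLike.ofReal ∘ (fun _ : Fin 3 => c)) =
          c • (1 : Matrix (Fin 3) (Fin 3) ℝ) := by
        ext i j
        by_cases hij : i = j <;> simp [Matrix.diagonal, hij, Matrix.one_apply]
      rw [hdiag, Unitary.conjStarAlgAut_apply, Matrix.mul_smul, Matrix.smul_mul, Matrix.mul_one,
        (Matrix.mem_unitaryGroup_iff).mp hA.eigenvectorUnitary.2] at hst
      exact hst
    have hUeq : U = Matrix.vecMulVec w w - A := by
      rw [hAdef]; abel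
    rw [hUeq, hAc]
    congr 1
    rw [hS3]; ring_nf
  · intro h
    have hAc : A = ((1 / 3) * S) • (1 : Matrix (Fin 3) (Fin 3) ℝ) := by
      rw [hAdef, h]; abel
    have hev := diag_eq hA _ hAc
    rw [hlam]
    have : (⨆ i, hA.eigenvalues i) = (1 / 3) * S := by
      rw [funext hev]
      exact ciSup_const
    rw [this]; ring
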